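/- Let E ⊆ [0,1] be measurable with |E| ≤ ε for some 0 < ε ≤ 1/2, and let 𝐉 be a countable collection of pairwise disjoint subintervals of [0,1] each satisfying |E ∩ J| ≤ ε|E||J|. Then Σ_{J∈𝐉} |E ∩ J| · log(|E||J|/|E ∩ J|) ≲ ε^{1/2} |E|, where terms with |E ∩ J| = 0 are interpreted as 0, and the implied constant is absolute. -/
import Mathlib


open MeasureTheory Set
open scoped ENNReal NNReal

lemma key_ineq {ε a b : ℝ} (hε : 0 ≤ ε) (ha : 0 ≤ a) (hb : 0 ≤ b)
    (hab : a ≤ ε * b) : a * Real.log (b / a) ≤ 2 * Real.sqrt ε * b := by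
  rcases eq_or_lt_of_le ha with h0 | h0
  · simp [← h0]
    positivity
  · have hbpos : 0 < b := by
      rcases eq_or_lt_of_le hb with hb0 | hb0
      · exfalso; nlinarith
      · exact hb0
    have hx : 0 < b / a := div_pos hbpos h0
    have hlog : Real.log (b / a) ≤ 2 * Real.sqrt (b / a) := by
      have h1 : Real.log (b / a) = 2 * Real.log (Real.sqrt (b / a)) := by
        rw [Real.log_sqrt hx.le]; ring
      have h2 : Real.log (Real.sqrt (b / a)) ≤ Real.sqrt (b / a) - 1 :=
        Real.log_le_sub_one_of_pos (Real.sqrt_pos.mpr hx)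
      nlinarith [Real.sqrt_nonneg (b / a)]
    have step1 : a * Real.log (b / a) ≤ 2 * (Real.sqrt a * Real.sqrt b) := by
      have : a * Real.sqrt (b / a) = Real.sqrt a * Real.sqrt b := by
        have ha' : a ≠ 0 := ne_of_gt h0
        calc a * Real.sqrt (b / a) = Real.sqrt a * Real.sqrt a * Real.sqrt (b / a) := by
              rw [Real.mul_self_sqrt ha]
          _ = Real.sqrt a * Real.sqrt (a * (b / a)) := by
              rw [Real.sqrt_mul ha]; ring
          _ = Real.sqrt a * Real.sqrt b := by rw [mul_div_cancel₀ b ha']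
      nlinarith [Real.sqrt_nonneg (b / a), mul_le_mul_of_nonneg_left hlog ha,
        Real.sqrt_nonneg a, Real.sqrt_nonneg b]
    have step2 : Real.sqrt a ≤ Real.sqrt ε * Real.sqrt b := by
      rw [← Real.sqrt_mul hε]
      exact Real.sqrt_le_sqrt hab
    have hsb : Real.sqrt b * Real.sqrt b = b := Real.mul_self_sqrt hb
    nlinarith [Real.sqrt_nonneg b, Real.sqrt_nonneg ε,
      mul_le_mul_of_nonneg_right step2 (Real.sqrt_nonneg b)]

/-- If `E ⊆ [0,1]` has `|E| ≤ ε ≤ 1/2` and `𝐉` is a countable family of pairwise disjoint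
subintervals of `[0,1]` with `|E∩J| ≤ ε|E||J|` for each `J`, then
`Σ_J |E∩J| log(|E||J|/|E∩J|) ≲ ε^{1/2}|E|` with an absolute constant (the terms with
`|E∩J| = 0` contribute `0`, as `0·log(·/0) = 0` in Lean's conventions). -/
theorem stmt_8 :
    ∃ C : ℝ, 0 < C ∧
      ∀ (ε : ℝ), 0 < ε → ε ≤ 1 / 2 →
      ∀ (E : Set ℝ), MeasurableSet E → E ⊆ Set.Icc (0 : ℝ) 1 → (volume E).toReal ≤ ε →
      ∀ (J : ℕ → Set ℝ), (∀ n, (J n).OrdConnected) → (∀ n, MeasurableSet (J n)) →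
        (∀ n, J n ⊆ Set.Icc (0 : ℝ) 1) →
        Pairwise (Function.onFun Disjoint J) →
        (∀ n, (volume (E ∩ J n)).toReal ≤ ε * (volume E).toReal * (volume (J n)).toReal) →
        (∑' n, ENNReal.ofReal
            ((volume (E ∩ J n)).toReal *
              Real.log ((volume E).toReal * (volume (J n)).toReal /
                (volume (E ∩ J n)).toReal))) ≤
          ENNReal.ofReal (C * Real.sqrt ε * (volume E).toReal) := by
  refine ⟨2, by norm_num, ?_⟩
  intro ε hε hε2 E hEm hEsub hEε J hord hJm hJsub hdisj hsmall
  set cR : ℝ := 2 * Real.sqrt ε * (volume E).toReal with hcR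
  have hcR0 : 0 ≤ cR := by positivity
  have hJfin : ∀ n, volume (J n) ≠ ⊤ := fun n =>
    ((measure_mono (hJsub n)).trans_lt (by simp)).ne
  have hterm : ∀ n,
      ENNReal.ofReal ((volume (E ∩ J n)).toReal *
        Real.log ((volume E).toReal * (volume (J n)).toReal /
          (volume (E ∩ J n)).toReal)) ≤ ENNReal.ofReal cR * volume (J n) := by
    intro n
    have hreal : (volume (E ∩ J n)).toReal *
        Real.log ((volume E).toReal * (volume (J n)).toReal /
          (volume (E ∩ J n)).toReal) ≤ cR * (volume (J n)).toReal := by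
      have := key_ineq (ε := ε) (a := (volume (E ∩ J n)).toReal)
        (b := (volume E).toReal * (volume (J n)).toReal) hε.le
        ENNReal.toReal_nonneg (by positivity)
        (by have := hsmall n; linarith)
      calc _ ≤ 2 * Real.sqrt ε * ((volume E).toReal * (volume (J n)).toReal) := this
        _ = cR * (volume (J n)).toReal := by rw [hcR]; ring
    calc ENNReal.ofReal _ ≤ ENNReal.ofReal (cR * (volume (J n)).toReal) :=
          ENNReal.ofReal_le_ofReal hreal
      _ = ENNReal.ofReal cR * ENNReal.ofReal ((volume (J n)).toReal) :=
          ENNReal.ofReal_mul hcR0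
      _ = ENNReal.ofReal cR * volume (J n) := by
          rw [ENNReal.ofReal_toReal (hJfin n)]
  calc (∑' n, ENNReal.ofReal ((volume (E ∩ J n)).toReal *
          Real.log ((volume E).toReal * (volume (J n)).toReal /
            (volume (E ∩ J n)).toReal)))
      ≤ ∑' n, ENNReal.ofReal cR * volume (J n) := ENNReal.tsum_le_tsum hterm
    _ = ENNReal.ofReal cR * ∑' n, volume (J n) := ENNReal.tsum_mul_left
    _ = ENNReal.ofReal cR * volume (⋃ n, J n) := by
        rw [measure_iUnion hdisj hJm]
    _ ≤ ENNReal.ofReal cR * volume (Set.Icc (0 : ℝ) 1) := by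
        gcongr
        exact Set.iUnion_subset hJsub
    _ = ENNReal.ofReal cR := by
        rw [Real.volume_Icc]; norm_num
    _ = ENNReal.ofReal (2 * Real.sqrt ε * (volume E).toReal) := rfl
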